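/- Let q be a prime power and A an n×n hermitian matrix over F_{q^2} of rank r. Then the number of points ⟨x⟩ of the projective space PG(n−1, q^2) (one-dimensional subspaces of F_{q^2}^n) with x* A x = 0 equals (q^{2n−1} + (−1)^r (q−1) q^{2n−r−1} − 1)/(q^2 − 1). -/

import Mathlib

open Matrix

section Auxiliary

open Finset

variable {q : ℕ} {F : Type} [Field F] [Fintype F]

set_option linter.unusedSectionVars false



lemma frob_add (hq : IsPrimePow q) (hF : Fintype.card F = q ^ 2) (x y : F) :
    (x + y) ^ q = x ^ q + y ^ q := by
  obtain ⟨p, k, hp, hk, rfl⟩ := hq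
  have hp' : p.Prime := hp.nat_prime
  have hcardF : Fintype.card F = p ^ (2 * k) := by rw [hF, ← pow_mul, mul_comm]
  have hchar : CharP F p := by
    obtain ⟨p', hcp'⟩ := CharP.exists F
    obtain ⟨n, hpn, hcard⟩ := FiniteField.card F p'
    have : p ∣ p' ^ (n : ℕ) := by
      rw [← hcard, hcardF]; exact dvd_pow_self p (by omega)
    have h2 := (Nat.Prime.dvd_of_dvd_pow hp' this)
    have : p = p' := ((Nat.prime_dvd_prime_iff_eq hp' hpn).mp h2)
    rwa [this]
  haveI := hchar
  haveI : Fact p.Prime := ⟨hp'⟩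
  exact add_pow_char_pow x y p k

lemma frob_frob (hF : Fintype.card F = q ^ 2) (x : F) : (x ^ q) ^ q = x := by
  rw [← pow_mul, ← sq, ← hF, FiniteField.pow_card]

/-- The Frobenius `x ↦ x ^ q` as a ring hom. -/
noncomputable def frobQ (hq : IsPrimePow q) (hF : Fintype.card F = q ^ 2) : F →+* F where
  toFun x := x ^ q
  map_one' := one_pow q
  map_mul' x y := mul_pow x y q
  map_zero' := zero_pow (by have := hq.two_le; omega)
  map_add' := frob_add hq hF

@[simp] lemma frobQ_apply (hq : IsPrimePow q) (hF : Fintype.card F = q ^ 2) (x : F) :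
    frobQ hq hF x = x ^ q := rfl

variable [DecidableEq F]

open Polynomial


lemma card_pow_eq_le (m : ℕ) (hm : 0 < m) (a : F) :
    (univ.filter fun t : F => t ^ m = a).card ≤ m := by
  classical
  have hP : (X ^ m - C a : F[X]) ≠ 0 := by
    intro h
    have := congrArg natDegree h
    rw [natDegree_X_pow_sub_C, natDegree_zero] at this
    omega
  calc (univ.filter fun t : F => t ^ m = a).card
      ≤ (X ^ m - C a : F[X]).roots.toFinset.card := by
        apply Finset.card_le_card
        intro t ht
        simp only [mem_filter, mem_univ, true_and] at ht
        simp only [Multiset.mem_toFinset, mem_roots hP, IsRoot.def, eval_sub, eval_pow, eval_X,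
          eval_C, ht, sub_self]
    _ ≤ Multiset.card (X ^ m - C a : F[X]).roots := Multiset.toFinset_card_le _
    _ ≤ m := by
        have := card_roots' (X ^ m - C a : F[X])
        rwa [natDegree_X_pow_sub_C] at this

lemma qsq_sub_one (hq : 2 ≤ q) : (q + 1) * (q - 1) = q ^ 2 - 1 := by
  obtain ⟨m, rfl⟩ : ∃ m, q = m + 1 := ⟨q - 1, by omega⟩
  simp only [Nat.add_sub_cancel]
  symm
  apply Nat.sub_eq_of_eq_add
  ring

lemma card_norm_fiber (hq : IsPrimePow q) (hF : Fintype.card F = q ^ 2)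
    {a : F} (ha : a ^ (q - 1) = 1) :
    (univ.filter fun t : F => t ^ (q + 1) = a).card = q + 1 := by
  have h2 : 2 ≤ q := hq.two_le
  set V : Finset F := univ.filter fun b : F => b ^ (q - 1) = 1 with hV
  have haV : a ∈ V := by simp [hV, ha]
  have hmemV : ∀ t : F, t ≠ 0 → t ^ (q + 1) ∈ V := by
    intro t ht
    simp only [hV, mem_filter, mem_univ, true_and, ← pow_mul]
    rw [qsq_sub_one h2, ← hF]
    exact FiniteField.pow_card_sub_one_eq_one t ht
  have hfib : ∀ b ∈ V, ((univ.filter fun t : F => t ≠ 0).filter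
      fun t => t ^ (q + 1) = b).card = (univ.filter fun t : F => t ^ (q + 1) = b).card := by
    intro b hb
    congr 1
    rw [filter_filter]
    apply filter_congr
    intro t _
    simp only [hV, mem_filter, mem_univ, true_and] at hb
    constructor
    · rintro ⟨-, h⟩; exact h
    · intro h
      refine ⟨?_, h⟩
      rintro rfl
      rw [zero_pow (by omega)] at h
      rw [← h, zero_pow (by omega)] at hb
      exact zero_ne_one hb
  have hsum : ∑ b ∈ V, (univ.filter fun t : F => t ^ (q + 1) = b).card = q ^ 2 - 1 := by
    have hpart := Finset.card_eq_sum_card_fiberwise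
      (s := univ.filter fun t : F => t ≠ 0) (t := V) (f := fun t => t ^ (q + 1))
      (fun x hx => hmemV x (by simpa using hx))
    rw [Finset.sum_congr rfl hfib] at hpart
    rw [← hpart, filter_ne', card_erase_of_mem (mem_univ 0), card_univ, hF]
  have hle : ∀ b ∈ V, (univ.filter fun t : F => t ^ (q + 1) = b).card ≤ q + 1 :=
    fun b _ => card_pow_eq_le (q + 1) (by omega) b
  have hVcard : V.card ≤ q - 1 := card_pow_eq_le (q - 1) (by omega) 1
  have hsum2 : ∑ b ∈ V, (univ.filter fun t : F => t ^ (q + 1) = b).card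
      = ∑ _b ∈ V, (q + 1) := by
    apply le_antisymm (Finset.sum_le_sum hle)
    rw [Finset.sum_const, smul_eq_mul, hsum]
    calc V.card * (q + 1) ≤ (q - 1) * (q + 1) := Nat.mul_le_mul_right _ hVcard
      _ = q ^ 2 - 1 := by rw [mul_comm]; exact qsq_sub_one h2
  exact (Finset.sum_eq_sum_iff_of_le hle).mp hsum2 a haV

lemma exists_norm (hq : IsPrimePow q) (hF : Fintype.card F = q ^ 2)
    {a : F} (ha : a ^ (q - 1) = 1) : ∃ t : F, t ^ (q + 1) = a := by
  have h := card_norm_fiber hq hF ha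
  have : (univ.filter fun t : F => t ^ (q + 1) = a).Nonempty := by
    rw [← Finset.card_pos, h]; omega
  obtain ⟨t, ht⟩ := this
  exact ⟨t, (mem_filter.mp ht).2⟩

lemma norm_fixed (hq : IsPrimePow q) (hF : Fintype.card F = q ^ 2) (x : F) :
    (x ^ (q + 1)) ^ q = x ^ (q + 1) := by
  calc (x ^ (q + 1)) ^ q = ((x ^ q) * x) ^ q := by rw [← pow_succ]
    _ = (x ^ q) ^ q * x ^ q := mul_pow _ _ _
    _ = x * x ^ q := by rw [frob_frob hF]
    _ = x ^ (q + 1) := (pow_succ' x q).symm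

lemma fixed_pow_sub_one (hq : IsPrimePow q) {s : F} (hs : s ≠ 0) (hfix : s ^ q = s) :
    s ^ (q - 1) = 1 := by
  have h2 := hq.two_le
  have h : s ^ (q - 1) * s = 1 * s := by
    rw [one_mul, ← pow_succ]
    have h1 : q - 1 + 1 = q := by omega
    rw [h1, hfix]
  exact mul_right_cancel₀ hs h

lemma count_diag_form (hq : IsPrimePow q) (hF : Fintype.card F = q ^ 2) :
    ∀ (n : ℕ) (d : Fin n → F), (∀ i, d i = 0 ∨ d i = 1) →
    ((univ.filter fun x : Fin n → F => ∑ i, d i * (x i) ^ (q + 1) = 0).card : ℤ) * q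
      = (q : ℤ) ^ (2 * n) + (-1) ^ ((univ.filter fun i => d i ≠ 0).card) * ((q : ℤ) - 1)
          * (q : ℤ) ^ (2 * n - (univ.filter fun i => d i ≠ 0).card) := by
  have h2 : 2 ≤ q := hq.two_le
  intro n
  induction n with
  | zero =>
      intro d _
      have h1 : (univ.filter fun x : Fin 0 → F => ∑ i, d i * (x i) ^ (q + 1) = 0) = univ := by
        apply filter_true_of_mem; intro x _; simp
      have h0 : (univ.filter fun i : Fin 0 => d i ≠ 0) = ∅ := by
        apply filter_false_of_mem; intro x; exact absurd x.2 (by omega)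
      rw [h1, h0]
      simp
  | succ n IH =>
      intro d hd
      set d' : Fin n → F := fun i => d i.succ with hd'
      have hIH := IH d' (fun i => hd i.succ)
      set S : (Fin n → F) → F := fun y => ∑ i, d' i * (y i) ^ (q + 1) with hS
      set N' : ℕ := (univ.filter fun y : Fin n → F => S y = 0).card with hN'
      set r' : ℕ := (univ.filter fun i : Fin n => d' i ≠ 0).card with hr'
      have hr'le : r' ≤ n := by
        calc r' ≤ (univ : Finset (Fin n)).card := Finset.card_filter_le _ _
          _ = n := by simp
      have hIH' : (N' : ℤ) * q
          = (q : ℤ) ^ (2 * n) + (-1) ^ r' * ((q : ℤ) - 1) * (q : ℤ) ^ (2 * n - r') := hIH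
      have e2a : 2 * (n+1) - r' = (2 * n - r') + 2 := by omega
      have e2b : 2 * (n+1) - (r' + 1) = (2 * n - r') + 1 := by omega
      have e1 : 2 * (n+1) = 2 * n + 2 := by ring
      have hSfix : ∀ y : Fin n → F, (S y) ^ q = S y := by
        intro y
        have hmap := map_sum (frobQ hq hF) (fun i => d' i * (y i) ^ (q + 1)) univ
        simp only [frobQ_apply, _root_.map_mul] at hmap
        simp only [hS]
        rw [hmap]
        apply Finset.sum_congr rfl
        intro i _
        rw [norm_fixed hq hF]
        rcases hd i.succ with h | h
        · rw [show d' i = (0:F) from h]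
          rw [zero_pow (show q ≠ 0 by omega)]
        · rw [show d' i = (1:F) from h, one_pow]
      have hsplit : (univ.filter fun x : Fin (n+1) → F => ∑ i, d i * (x i) ^ (q + 1) = 0).card
          = ∑ y : Fin n → F,
              (univ.filter fun c : F => d 0 * c ^ (q + 1) + S y = 0).card := by
        rw [Finset.card_filter]
        rw [← Fintype.sum_equiv (Fin.consEquiv (fun _ : Fin (n+1) => F))
          (fun p : F × (Fin n → F) =>
            if ∑ i, d i * ((Fin.cons p.1 p.2 : Fin (n+1) → F) i) ^ (q + 1) = 0 then 1 else 0)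
          (fun x : Fin (n+1) → F => if ∑ i, d i * (x i) ^ (q + 1) = 0 then 1 else 0)
          (fun p => rfl)]
        rw [Fintype.sum_prod_type]
        rw [Finset.sum_comm]
        apply Finset.sum_congr rfl
        intro y _
        rw [Finset.card_filter]
        apply Finset.sum_congr rfl
        intro c _
        congr 1
        rw [Fin.sum_univ_succ]
        simp only [Fin.cons_zero, Fin.cons_succ]
        rfl
      have hcompl : ((univ.filter fun y : Fin n → F => ¬ S y = 0).card : ℤ)
          = (q:ℤ) ^ (2*n) - N' := by
        have hh := Finset.card_filter_add_card_filter_not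
          (s := (univ : Finset (Fin n → F))) (p := fun y => S y = 0)
        have hcu : (univ : Finset (Fin n → F)).card = q ^ (2*n) := by
          rw [card_univ, Fintype.card_fun, hF, ← pow_mul, Fintype.card_fin, mul_comm]
        rw [hcu] at hh
        have := congrArg (Nat.cast : ℕ → ℤ) hh
        push_cast at this
        rw [← hN'] at this
        linarith
      rcases hd 0 with h0 | h0
      · -- d 0 = 0 : free variable
        have hinner : ∀ y : Fin n → F,
            (univ.filter fun c : F => d 0 * c ^ (q + 1) + S y = 0).card
              = if S y = 0 then q ^ 2 else 0 := by
          intro y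
          by_cases hs : S y = 0
          · rw [if_pos hs]
            have heq : (univ.filter fun c : F => d 0 * c ^ (q + 1) + S y = 0) = univ := by
              apply filter_true_of_mem; intro c _; rw [h0, hs]; ring
            rw [heq, card_univ, hF]
          · rw [if_neg hs]
            rw [Finset.card_eq_zero, Finset.filter_eq_empty_iff]
            intro c _
            rw [h0, zero_mul, zero_add]
            exact hs
        have hcount : (univ.filter fun x : Fin (n+1) → F =>
            ∑ i, d i * (x i) ^ (q + 1) = 0).card = N' * q ^ 2 := by
          rw [hsplit, Finset.sum_congr rfl (fun y _ => hinner y), Finset.sum_ite,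
            Finset.sum_const, Finset.sum_const, smul_eq_mul, smul_eq_mul, mul_zero, add_zero]
        have hrcount : (univ.filter fun i : Fin (n+1) => d i ≠ 0).card = r' := by
          rw [Finset.card_filter, Fin.sum_univ_succ, if_neg (by simp [h0]), zero_add,
            hr', Finset.card_filter]
        rw [hcount, hrcount, e2a, e1, pow_add, pow_add]
        push_cast
        linear_combination (q : ℤ) ^ 2 * hIH'
      · -- d 0 = 1
        have hinner : ∀ y : Fin n → F,
            (univ.filter fun c : F => d 0 * c ^ (q + 1) + S y = 0).card
              = if S y = 0 then 1 else q + 1 := by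
          intro y
          by_cases hs : S y = 0
          · rw [if_pos hs]
            have heq : (univ.filter fun c : F => d 0 * c ^ (q + 1) + S y = 0) = {0} := by
              ext c
              simp only [mem_filter, mem_univ, true_and, mem_singleton, h0, hs, one_mul,
                add_zero]
              exact pow_eq_zero_iff (Nat.succ_ne_zero q)
            rw [heq, Finset.card_singleton]
          · rw [if_neg hs]
            have hfix : (-(S y)) ^ (q - 1) = 1 := by
              apply fixed_pow_sub_one hq (neg_ne_zero.mpr hs)
              have hneg := map_neg (frobQ hq hF) (S y)
              simp only [frobQ_apply] at hneg
              rw [hneg, hSfix]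
            have heq : (univ.filter fun c : F => d 0 * c ^ (q + 1) + S y = 0)
                = univ.filter fun c : F => c ^ (q + 1) = -(S y) := by
              apply filter_congr
              intro c _
              rw [h0, one_mul]
              constructor
              · intro h; exact eq_neg_of_add_eq_zero_left h
              · intro h; rw [h]; ring
            rw [heq, card_norm_fiber hq hF hfix]
        have hcount : ((univ.filter fun x : Fin (n+1) → F =>
            ∑ i, d i * (x i) ^ (q + 1) = 0).card : ℤ)
              = N' + ((q:ℤ) ^ (2*n) - N') * (q + 1) := by
          rw [hsplit, Nat.cast_sum]
          rw [Finset.sum_congr rfl (fun y _ => by rw [hinner y])]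
          simp only [apply_ite (Nat.cast : ℕ → ℤ), Nat.cast_one, Nat.cast_add]
          rw [Finset.sum_ite, Finset.sum_const, Finset.sum_const, nsmul_eq_mul, nsmul_eq_mul,
            mul_one, hcompl, ← hN']
        have hrcount : (univ.filter fun i : Fin (n+1) => d i ≠ 0).card = r' + 1 := by
          rw [Finset.card_filter, Fin.sum_univ_succ, if_pos (by simp [h0]), hr',
            Finset.card_filter]
          exact Nat.add_comm _ _
        rw [hcount, hrcount, e2b, e1, pow_add, pow_add]
        push_cast
        linear_combination (-(q:ℤ)) * hIH'

lemma exists_pow_q_ne (hq : IsPrimePow q) (hF : Fintype.card F = q ^ 2) (c : F) :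
    ∃ u : F, u ^ q ≠ c * u := by
  have h2 := hq.two_le
  by_contra hcon
  push_neg at hcon
  set P : Polynomial F := X ^ q - C c * X with hP
  have hdeg : P.natDegree = q := by
    rw [hP]
    rw [natDegree_sub_eq_left_of_natDegree_lt]
    · exact natDegree_X_pow q
    · rw [natDegree_X_pow]
      calc (C c * X : Polynomial F).natDegree ≤ 1 := by
            apply le_trans (natDegree_mul_le)
            simp
        _ < q := by omega
  have hPne : P ≠ 0 := by
    intro h
    rw [h, natDegree_zero] at hdeg
    omega
  have hsub : (univ : Finset F) ⊆ P.roots.toFinset := by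
    intro u _
    rw [Multiset.mem_toFinset, mem_roots hPne]
    simp [hP, IsRoot.def, hcon u]
  have hcard : q ^ 2 ≤ q := by
    calc q ^ 2 = (univ : Finset F).card := by rw [card_univ, hF]
      _ ≤ P.roots.toFinset.card := Finset.card_le_card hsub
      _ ≤ Multiset.card P.roots := Multiset.toFinset_card_le _
      _ ≤ P.natDegree := card_roots' P
      _ = q := hdeg
  nlinarith

lemma exists_orthogonal_basis (hq : IsPrimePow q) (hF : Fintype.card F = q ^ 2) :
    ∀ (n : ℕ) (V : Type) [AddCommGroup V] [Module F V] [FiniteDimensional F V],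
    Module.finrank F V = n →
    ∀ (φ : V → V → F),
    (∀ x y z, φ (x + y) z = φ x z + φ y z) →
    (∀ x y z, φ x (y + z) = φ x y + φ x z) →
    (∀ c x y, φ (c • x) y = c ^ q * φ x y) →
    (∀ c x y, φ x (c • y) = c * φ x y) →
    (∀ x y, φ y x = (φ x y) ^ q) →
    ∃ b : Module.Basis (Fin n) F V, (∀ i j, i ≠ j → φ (b i) (b j) = 0) ∧
      (∀ i, φ (b i) (b i) = 0 ∨ φ (b i) (b i) = 1) := by
  have h2 := hq.two_le
  intro n
  induction n with
  | zero =>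
      intro V _ _ _ hdim φ h1 h2' h3 h4 h5
      exact ⟨Module.finBasisOfFinrankEq F V hdim, fun i => i.elim0, fun i => i.elim0⟩
  | succ n IH =>
      intro V _ _ _ hdim φ h1 h2' h3 h4 h5
      by_cases hzero : ∀ x : V, φ x x = 0
      · have hφ0 : ∀ x y, φ x y = 0 := by
          intro x y
          by_contra ht
          have key : ∀ c : F, c ^ q * φ x y + c * (φ x y) ^ q = 0 := by
            intro c
            have h := hzero (c • x + y)
            simp only [h1, h2', h3, h4] at h
            rw [hzero x, hzero y, h5 x y] at h
            linear_combination h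
          have hfixall : ∀ c : F, c ^ q = c := by
            intro c
            have k1 := key 1
            rw [one_pow, one_mul, one_mul] at k1
            have hq1 : (φ x y) ^ q = -φ x y := by linear_combination k1
            have kc := key c
            rw [hq1] at kc
            have hz : (c ^ q - c) * φ x y = 0 := by linear_combination kc
            rcases mul_eq_zero.mp hz with h | h
            · exact sub_eq_zero.mp h
            · exact absurd h ht
          obtain ⟨u, hu⟩ := exists_pow_q_ne hq hF 1
          exact hu (by rw [hfixall u, one_mul])
        exact ⟨Module.finBasisOfFinrankEq F V hdim,
          fun i j _ => hφ0 _ _, fun i => Or.inl (hφ0 _ _)⟩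
      · push_neg at hzero
        obtain ⟨w0, hw0⟩ := hzero
        have hfix : (φ w0 w0) ^ q = φ w0 w0 := (h5 w0 w0).symm
        obtain ⟨t, ht⟩ := exists_norm hq hF (fixed_pow_sub_one hq hw0 hfix)
        have htne : t ≠ 0 := by
          rintro rfl
          rw [zero_pow (Nat.succ_ne_zero q)] at ht
          exact hw0 ht.symm
        set w : V := t⁻¹ • w0 with hw
        have hww : φ w w = 1 := by
          rw [hw, h3, h4, ← ht]
          rw [pow_succ, inv_pow]
          field_simp
        let ψ : V →ₗ[F] F :=
          { toFun := fun x => φ w x,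
            map_add' := fun a b => h2' w a b,
            map_smul' := fun c a => by
              simp only [RingHom.id_apply, smul_eq_mul]; exact h4 c w a }
        have hψw : ψ w = 1 := hww
        have hdimN : Module.finrank F (LinearMap.ker ψ) = n := by
          have hrange : LinearMap.range ψ = ⊤ := by
            rw [LinearMap.range_eq_top]
            intro a
            refine ⟨a • w, ?_⟩
            rw [_root_.map_smul, hψw, smul_eq_mul, mul_one]
          have hrn := LinearMap.finrank_range_add_finrank_ker ψ
          rw [hrange, finrank_top, Module.finrank_self, hdim] at hrn
          omega
        obtain ⟨c, hcorth, hcdiag⟩ := IH (LinearMap.ker ψ) hdimN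
          (fun a b => φ a b)
          (fun a b z => by push_cast; rw [← h1])
          (fun a b z => by push_cast; rw [← h2'])
          (fun r a b => by push_cast; rw [← h3])
          (fun r a b => by push_cast; rw [← h4])
          (fun a b => h5 a b)
        have hli : ∀ (a : F), ∀ x ∈ LinearMap.ker ψ, a • w + x = 0 → a = 0 := by
          intro a x hx hax
          have h9 := congrArg ψ hax
          rw [map_add, _root_.map_smul, hψw, LinearMap.mem_ker.mp hx, map_zero] at h9
          simpa using h9
        have hsp : ∀ z : V, ∃ a : F, z + a • w ∈ LinearMap.ker ψ := by
          intro z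
          refine ⟨-ψ z, ?_⟩
          rw [LinearMap.mem_ker, map_add, _root_.map_smul, hψw]
          simp
        set b : Module.Basis (Fin (n+1)) F V := Module.Basis.mkFinCons w c hli hsp with hb
        have hbcoe : (b : Fin (n+1) → V) = Fin.cons w ((↑) ∘ c) :=
          Module.Basis.coe_mkFinCons w c hli hsp
        have hb0 : b 0 = w := by rw [hbcoe]; rfl
        have hbs : ∀ i : Fin n, b i.succ = (c i : V) := by
          intro i; rw [hbcoe]; simp
        have hker0 : ∀ i : Fin n, φ w (c i) = 0 := fun i => LinearMap.mem_ker.mp (c i).2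
        refine ⟨b, ?_, ?_⟩
        · intro i j hij
          rcases Fin.eq_zero_or_eq_succ i with rfl | ⟨i', rfl⟩ <;>
            rcases Fin.eq_zero_or_eq_succ j with rfl | ⟨j', rfl⟩
          · exact absurd rfl hij
          · rw [hb0, hbs j']
            exact hker0 j'
          · rw [hbs i', hb0, h5 w ((c i' : V))]
            rw [hker0 i', zero_pow (show q ≠ 0 by omega)]
          · rw [hbs i', hbs j']
            exact hcorth i' j' (fun h => hij (by rw [h]))
        · intro i
          rcases Fin.eq_zero_or_eq_succ i with rfl | ⟨i', rfl⟩
          · rw [hb0]; exact Or.inr hww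
          · rw [hbs i']
            exact hcdiag i'

lemma count_vectors (hq : IsPrimePow q) (hF : Fintype.card F = q ^ 2)
    (n : ℕ) (A : Matrix (Fin n) (Fin n) F) (hHerm : (A.map (· ^ q))ᵀ = A)
    (r : ℕ) (hr : A.rank = r) :
    ((univ.filter fun x : Fin n → F => ∑ i, (x i) ^ q * (A *ᵥ x) i = 0).card : ℤ) * q
      = (q : ℤ) ^ (2 * n) + (-1) ^ r * ((q : ℤ) - 1) * (q : ℤ) ^ (2 * n - r) := by
  have h2 := hq.two_le
  have hAij : ∀ i j, (A j i) ^ q = A i j := by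
    intro i j
    have := congrFun (congrFun hHerm i) j
    simpa using this
  set φ : (Fin n → F) → (Fin n → F) → F :=
    fun x y => ∑ i, (x i) ^ q * (A *ᵥ y) i with hφ
  have h1 : ∀ x y z, φ (x + y) z = φ x z + φ y z := by
    intro x y z
    simp only [hφ, Pi.add_apply]
    rw [← Finset.sum_add_distrib]
    apply sum_congr rfl
    intro i _
    rw [frob_add hq hF, add_mul]
  have h2' : ∀ x y z, φ x (y + z) = φ x y + φ x z := by
    intro x y z
    simp only [hφ, mulVec_add, Pi.add_apply]
    rw [← Finset.sum_add_distrib]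
    apply sum_congr rfl
    intro i _
    rw [mul_add]
  have h3 : ∀ c x y, φ (c • x) y = c ^ q * φ x y := by
    intro c x y
    simp only [hφ, Pi.smul_apply, smul_eq_mul, Finset.mul_sum]
    apply sum_congr rfl
    intro i _
    rw [mul_pow]
    ring
  have h4 : ∀ c x y, φ x (c • y) = c * φ x y := by
    intro c x y
    simp only [hφ, mulVec_smul, Pi.smul_apply, smul_eq_mul, Finset.mul_sum]
    apply sum_congr rfl
    intro i _
    ring
  have h5 : ∀ x y, φ y x = (φ x y) ^ q := by
    intro x y
    have hmap := map_sum (frobQ hq hF) (fun i => (x i) ^ q * (A *ᵥ y) i) univ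
    simp only [frobQ] at hmap
    simp only [RingHom.coe_mk, MonoidHom.coe_mk, OneHom.coe_mk] at hmap
    rw [hφ]
    simp only []
    rw [hmap]
    have hterm : ∀ i, ((x i) ^ q * (A *ᵥ y) i) ^ q
        = x i * ∑ j, A j i * (y j) ^ q := by
      intro i
      rw [mul_pow, frob_frob hF]
      congr 1
      rw [mulVec, dotProduct]
      have hmap2 := map_sum (frobQ hq hF) (fun j => A i j * y j) univ
      simp only [frobQ] at hmap2
      simp only [RingHom.coe_mk, MonoidHom.coe_mk, OneHom.coe_mk] at hmap2
      rw [hmap2]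
      apply sum_congr rfl
      intro j _
      rw [mul_pow, hAij j i]
    rw [Finset.sum_congr rfl (fun i _ => hterm i)]
    calc φ y x = ∑ j, ∑ i, (y j) ^ q * (A j i * x i) := by
          apply sum_congr rfl
          intro j _
          rw [mulVec, dotProduct, Finset.mul_sum]
      _ = ∑ i, ∑ j, (y j) ^ q * (A j i * x i) := Finset.sum_comm
      _ = ∑ i, x i * ∑ j, A j i * (y j) ^ q := by
          apply sum_congr rfl
          intro i _
          rw [Finset.mul_sum]
          apply sum_congr rfl
          intro j _
          ring
  -- orthogonal basis
  obtain ⟨b, horth, hdiag⟩ := exists_orthogonal_basis hq hF n (Fin n → F)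
    (Module.finrank_fin_fun F) φ h1 h2' h3 h4 h5
  set M : Matrix (Fin n) (Fin n) F := (Pi.basisFun F (Fin n)).toMatrix ⇑b with hM
  have hMe : ∀ i k, M k i = b i k := by
    intro i k
    rw [hM, Module.Basis.toMatrix_apply, Pi.basisFun_repr]
  have hdet : IsUnit M.det :=
    isUnit_det_of_right_inverse (Module.Basis.toMatrix_mul_toMatrix_flip _ _)
  set d : Fin n → F := fun i => φ (b i) (b i) with hd
  have hd01 : ∀ i, d i = 0 ∨ d i = 1 := hdiag
  have hcong : (M.map (· ^ q))ᵀ * A * M = diagonal d := by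
    ext i j
    rw [Matrix.mul_assoc, Matrix.mul_apply]
    have hent : ∑ l, ((M.map (· ^ q))ᵀ) i l * (A * M) l j = φ (b i) (b j) := by
      apply sum_congr rfl
      intro l _
      rw [transpose_apply, map_apply, hMe, Matrix.mul_apply]
      congr 1
    rw [hent]
    by_cases hij : i = j
    · subst hij; rw [diagonal_apply_eq]
    · rw [diagonal_apply_ne _ hij]; exact horth i j hij
  -- rank identification
  have hrank : r = (univ.filter fun i => d i ≠ 0).card := by
    have hdet2 : IsUnit ((M.map (· ^ q))ᵀ).det := by
      rw [det_transpose]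
      have hmapdet : (M.map (· ^ q)).det = (M.det) ^ q := by
        have hh := (frobQ hq hF).map_det M
        rw [RingHom.mapMatrix_apply] at hh
        simp only [frobQ] at hh
        simp only [RingHom.coe_mk, MonoidHom.coe_mk, OneHom.coe_mk] at hh
        exact hh.symm
      rw [hmapdet]
      exact hdet.pow q
    have h2r : ((M.map (· ^ q))ᵀ * A * M).rank = A.rank := by
      rw [rank_mul_eq_left_of_isUnit_det _ _ hdet,
        rank_mul_eq_right_of_isUnit_det _ _ hdet2]
    rw [hcong, rank_diagonal, hr] at h2r
    rw [← h2r, Fintype.card_subtype]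
  -- change of variables
  have hMM : ∀ v : Fin n → F, M *ᵥ (M⁻¹ *ᵥ v) = v := by
    intro v
    rw [mulVec_mulVec, mul_nonsing_inv _ hdet, one_mulVec]
  have hMM' : ∀ v : Fin n → F, M⁻¹ *ᵥ (M *ᵥ v) = v := by
    intro v
    rw [mulVec_mulVec, nonsing_inv_mul _ hdet, one_mulVec]
  have hquad : ∀ y : Fin n → F, φ (M *ᵥ y) (M *ᵥ y) = ∑ i, d i * (y i) ^ (q + 1) := by
    intro y
    have hstep1 : ∀ k, ((M *ᵥ y) k) ^ q = ∑ j, (M k j) ^ q * (y j) ^ q := by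
      intro k
      have hmap := map_sum (frobQ hq hF) (fun j => M k j * y j) univ
      simp only [frobQ] at hmap
      simp only [RingHom.coe_mk, MonoidHom.coe_mk, OneHom.coe_mk] at hmap
      rw [show (M *ᵥ y) k = ∑ j, M k j * y j from rfl, hmap]
      apply sum_congr rfl
      intro j _
      rw [mul_pow]
    calc φ (M *ᵥ y) (M *ᵥ y)
        = ∑ k, (∑ j, (M k j) ^ q * (y j) ^ q) * (A *ᵥ (M *ᵥ y)) k := by
          apply sum_congr rfl
          intro k _
          rw [hstep1]
      _ = ∑ k, ∑ j, (y j) ^ q * (((M.map (· ^ q))ᵀ) j k * (A *ᵥ (M *ᵥ y)) k) := by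
          apply sum_congr rfl
          intro k _
          rw [Finset.sum_mul]
          apply sum_congr rfl
          intro j _
          rw [transpose_apply, map_apply]
          ring
      _ = ∑ j, ∑ k, (y j) ^ q * (((M.map (· ^ q))ᵀ) j k * (A *ᵥ (M *ᵥ y)) k) :=
          Finset.sum_comm
      _ = ∑ j, (y j) ^ q * (((M.map (· ^ q))ᵀ * A * M) *ᵥ y) j := by
          apply sum_congr rfl
          intro j _
          rw [← Finset.mul_sum]
          congr 1
          rw [mulVec_mulVec]
          conv_rhs => rw [Matrix.mul_assoc, ← mulVec_mulVec]
          rfl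
      _ = ∑ j, d j * (y j) ^ (q + 1) := by
          apply sum_congr rfl
          intro j _
          rw [hcong, mulVec_diagonal, pow_succ]
          ring
  have hbij : (univ.filter fun x : Fin n → F => φ x x = 0).card
      = (univ.filter fun y : Fin n → F => ∑ i, d i * (y i) ^ (q + 1) = 0).card := by
    symm
    apply Finset.card_bij' (fun y _ => M *ᵥ y) (fun x _ => M⁻¹ *ᵥ x)
    · intro y hy
      rw [mem_filter] at hy ⊢
      refine ⟨mem_univ _, ?_⟩
      rw [hquad y, hy.2]
    · intro x hx
      rw [mem_filter] at hx ⊢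
      refine ⟨mem_univ _, ?_⟩
      rw [← hquad (M⁻¹ *ᵥ x), hMM x, hx.2]
    · intro y _
      exact hMM' y
    · intro x _
      exact hMM x
  show ((univ.filter fun x : Fin n → F => φ x x = 0).card : ℤ) * q = _
  rw [hbij, hrank]
  exact count_diag_form hq hF n d hd01

end Auxiliary

open Finset in
/-- The number of projective points `⟨x⟩` of `PG(n-1, q^2)` lying on the
hermitian variety of a hermitian matrix `A` of rank `r` equals
`(q^(2n-1) + (-1)^r (q-1) q^(2n-r-1) - 1) / (q^2 - 1)`. -/
theorem card_hermitian_variety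
    (q : ℕ) (hq : IsPrimePow q)
    (F : Type) [Field F] [Fintype F]
    (hF : Fintype.card F = q ^ 2) (n : ℕ) (hn : 1 ≤ n)
    (A : Matrix (Fin n) (Fin n) F)
    (hHerm : (A.map (· ^ q))ᵀ = A) (r : ℕ) (hr : A.rank = r) :
    ({L : Submodule F (Fin n → F) |
        Module.finrank F L = 1 ∧
        ∀ x ∈ L, (fun i => (x i) ^ q) ⬝ᵥ (A *ᵥ x) = 0}.ncard : ℤ) *
      ((q : ℤ) ^ 2 - 1) =
      (q : ℤ) ^ (2 * n - 1) + (-1) ^ r * ((q : ℤ) - 1) * (q : ℤ) ^ (2 * n - r - 1) - 1 := by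
  classical
  have h2 : 2 ≤ q := hq.two_le
  have hrle : r ≤ n := by
    rw [← hr]
    calc A.rank ≤ Fintype.card (Fin n) := A.rank_le_card_width
      _ = n := Fintype.card_fin n
  have hqne : q ≠ 0 := by omega
  have e1n : 2 * n - 1 + 1 = 2 * n := by omega
  have e2n : 2 * n - r - 1 + 1 = 2 * n - r := by omega
  have hq21 : 1 ≤ q ^ 2 := Nat.one_le_pow _ _ (by omega)
  -- the quadratic form
  set form : (Fin n → F) → F := fun x => ∑ i, (x i) ^ q * (A *ᵥ x) i with hform
  have hformdot : ∀ x : Fin n → F, ((fun i => (x i) ^ q) ⬝ᵥ (A *ᵥ x)) = form x := fun x => rfl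
  have hN := count_vectors hq hF n A hHerm r hr
  set N : ℕ := (univ.filter fun x : Fin n → F => ∑ i, (x i) ^ q * (A *ᵥ x) i = 0).card with hNdef
  have hform0 : form 0 = 0 := by
    rw [hform]
    simp only [Pi.zero_apply, mulVec_zero, zero_pow hqne, zero_mul,
      Finset.sum_const_zero]
  have hsmul : ∀ (c : F) (x : Fin n → F), form (c • x) = c ^ (q + 1) * form x := by
    intro c x
    rw [hform]
    simp only [Pi.smul_apply, smul_eq_mul, mulVec_smul, Finset.mul_sum]
    apply sum_congr rfl
    intro i _
    rw [mul_pow, pow_succ]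
    ring
  -- the line set
  set L : Set (Submodule F (Fin n → F)) :=
    {L : Submodule F (Fin n → F) |
        Module.finrank F L = 1 ∧
        ∀ x ∈ L, (fun i => (x i) ^ q) ⬝ᵥ (A *ᵥ x) = 0} with hL
  haveI : Finite (Submodule F (Fin n → F)) :=
    Finite.of_injective (fun N => (N : Set (Fin n → F))) SetLike.coe_injective
  haveI : Fintype (Submodule F (Fin n → F)) := Fintype.ofFinite _
  set Lf : Finset (Submodule F (Fin n → F)) := L.toFinset with hLf
  have hncard : L.ncard = Lf.card := by
    rw [hLf, Set.ncard_eq_toFinset_card']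
  -- nonzero isotropic vectors
  set T : Finset (Fin n → F) := univ.filter (fun x => form x = 0 ∧ x ≠ 0) with hT
  have hNT : N = T.card + 1 := by
    have hsplit : (univ.filter fun x : Fin n → F => ∑ i, (x i) ^ q * (A *ᵥ x) i = 0)
        = insert 0 T := by
      ext x
      by_cases hx : x = 0
      · subst hx
        simp only [mem_filter, mem_univ, true_and, mem_insert, true_or, iff_true]
        exact hform0
      · simp only [mem_filter, mem_univ, true_and, mem_insert, hx, false_or, hT]
        constructor
        · exact fun h => ⟨h, hx⟩
        · exact fun h => h.1
    rw [hNdef, hsplit, card_insert_of_notMem]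
    simp [hT]
  have hTL : ∀ x ∈ T, Submodule.span F {x} ∈ Lf := by
    intro x hx
    rw [hT, mem_filter] at hx
    obtain ⟨-, hx0, hxne⟩ := hx
    rw [hLf, Set.mem_toFinset, hL]
    constructor
    · exact finrank_span_singleton hxne
    · intro y hy
      obtain ⟨c, rfl⟩ := Submodule.mem_span_singleton.mp hy
      rw [hformdot, hsmul, hx0, mul_zero]
  have hfiber : ∀ l ∈ Lf, (T.filter fun x => Submodule.span F {x} = l).card = q ^ 2 - 1 := by
    intro l hl
    rw [hLf, Set.mem_toFinset, hL] at hl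
    obtain ⟨hl1, hl2⟩ := hl
    have hfeq : (T.filter fun x => Submodule.span F {x} = l)
        = (univ.filter fun x : Fin n → F => x ∈ l).erase 0 := by
      ext x
      simp only [mem_filter, mem_erase, mem_univ, true_and, hT]
      constructor
      · rintro ⟨⟨hx0, hxne⟩, hsp⟩
        refine ⟨hxne, ?_⟩
        rw [← hsp]
        exact Submodule.mem_span_singleton_self x
      · rintro ⟨hxne, hxl⟩
        have hsp : Submodule.span F {x} = l := by
          apply Submodule.eq_of_le_of_finrank_eq
          · rw [Submodule.span_le, Set.singleton_subset_iff]
            exact hxl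
          · rw [finrank_span_singleton hxne, hl1]
        refine ⟨⟨?_, hxne⟩, hsp⟩
        rw [← hformdot]
        exact hl2 x hxl
    rw [hfeq, card_erase_of_mem (by simp [Submodule.zero_mem l])]
    have hcardl : (univ.filter fun x : Fin n → F => x ∈ l).card = q ^ 2 := by
      have hcs : Fintype.card {x : Fin n → F // x ∈ l}
          = (univ.filter fun x : Fin n → F => x ∈ l).card := Fintype.card_subtype _
      have hcl : Fintype.card {x : Fin n → F // x ∈ l} = q ^ 2 := by
        have := Module.card_eq_pow_finrank (K := F) (V := {x : Fin n → F // x ∈ l})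
        rw [hF] at this
        rw [this]
        have : Module.finrank F {x : Fin n → F // x ∈ l} = 1 := hl1
        rw [this, pow_one]
      rw [← hcs, hcl]
    rw [hcardl]
  have hTcard : T.card = Lf.card * (q ^ 2 - 1) := by
    rw [Finset.card_eq_sum_card_fiberwise hTL, Finset.sum_congr rfl hfiber,
      Finset.sum_const, smul_eq_mul]
  -- final arithmetic
  have hq0 : (q : ℤ) ≠ 0 := by positivity
  have hTN : (T.card : ℤ) = (N : ℤ) - 1 := by rw [hNT]; push_cast; ring
  have hLT : (T.card : ℤ) = (Lf.card : ℤ) * ((q : ℤ) ^ 2 - 1) := by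
    rw [hTcard]
    push_cast [Nat.cast_sub hq21]
    ring
  have e1 : (q : ℤ) ^ (2 * n) = (q : ℤ) ^ (2 * n - 1) * q := by
    rw [← pow_succ, e1n]
  have e2 : (q : ℤ) ^ (2 * n - r) = (q : ℤ) ^ (2 * n - r - 1) * q := by
    rw [← pow_succ, e2n]
  rw [e1, e2] at hN
  rw [hncard]
  apply mul_right_cancel₀ hq0
  linear_combination hN + (q : ℤ) * hTN - (q : ℤ) * hLT
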